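/- In A = ℂ[x,y] with derivations d1 = x ∂/∂x and d2 = y ∂/∂y, the derivation λ1 d1 + λ2 d2 (with (λ1,λ2) ≠ (0,0)) admits a first integral if and only if λ1 = 0, or λ2 = 0, or λ1/λ2 is a negative rational number. -/

import Mathlib

open MvPolynomial

lemma X_mul_pderiv_monomial (i : Fin 2) (m : Fin 2 →₀ ℕ) (a : ℂ) :
    (X i : MvPolynomial (Fin 2) ℂ) * pderiv i (monomial m a)
      = (m i : ℂ) • monomial m a := by
  rw [pderiv_monomial]
  rcases Nat.eq_zero_or_pos (m i) with h0 | hpos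
  · simp [h0]
  · have hs : Finsupp.single i 1 + (m - Finsupp.single i 1) = m := by
      ext j
      rcases eq_or_ne j i with rfl | hj
      · simp [Finsupp.single_apply]
        omega
      · simp [Finsupp.single_apply, Ne.symm hj]
    rw [X, monomial_mul, one_mul, hs, smul_monomial, smul_eq_mul, mul_comm]

lemma coeff_X_mul_pderiv (i : Fin 2) (m : Fin 2 →₀ ℕ) (f : MvPolynomial (Fin 2) ℂ) :
    coeff m (X i * pderiv i f) = (m i : ℂ) * coeff m f := by
  induction f using MvPolynomial.induction_on' with
  | monomial m' a =>
      rw [_root_.X_mul_pderiv_monomial, coeff_smul, smul_eq_mul, coeff_monomial]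
      rcases eq_or_ne m' m with rfl | hne
      · simp
      · simp [hne]
  | add p q hp hq =>
      rw [map_add, mul_add, coeff_add, coeff_add, hp, hq, mul_add]

/-- In ℂ[x,y], with d₁ = x ∂/∂x and d₂ = y ∂/∂y, the derivation λ₁d₁ + λ₂d₂
(with (λ₁,λ₂) ≠ (0,0)) has a first integral iff λ₁ = 0, or λ₂ = 0, or λ₁/λ₂ is
a negative rational number. -/
theorem first_integral_iff_rational_slope
    (l1 l2 : ℂ) (h : ¬(l1 = 0 ∧ l2 = 0)) :
    (∃ f : MvPolynomial (Fin 2) ℂ, (∀ c : ℂ, f ≠ C c) ∧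
        l1 • (X 0 * pderiv 0 f) + l2 • (X 1 * pderiv 1 f) = 0) ↔
      (l1 = 0 ∨ l2 = 0 ∨
        ∃ p q : ℕ, 0 < p ∧ 0 < q ∧ (q : ℂ) * l1 + (p : ℂ) * l2 = 0) := by
  constructor
  · rintro ⟨f, hnc, heq⟩
    -- find a nonzero exponent in the support of f
    obtain ⟨m, hm, hm0⟩ : ∃ m ∈ f.support, m ≠ 0 := by
      by_contra hc
      push_neg at hc
      apply hnc (coeff 0 f)
      ext m'
      rcases eq_or_ne m' 0 with rfl | hne
      · simp
      · rw [coeff_C, if_neg (fun h' => hne h'.symm)]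
        by_contra hne'
        exact hne (hc m' (mem_support_iff.2 hne'))
    have hcoeff : coeff m f ≠ 0 := mem_support_iff.1 hm
    have key : ((m 0 : ℂ) * l1 + (m 1 : ℂ) * l2) * coeff m f = 0 := by
      have := congrArg (coeff m) heq
      rw [coeff_add, coeff_smul, coeff_smul, coeff_X_mul_pderiv, coeff_X_mul_pderiv,
        coeff_zero, smul_eq_mul, smul_eq_mul] at this
      rw [← this]; ring
    have key2 : (m 0 : ℂ) * l1 + (m 1 : ℂ) * l2 = 0 :=
      (mul_eq_zero.1 key).resolve_right hcoeff
    rcases Nat.eq_zero_or_pos (m 0) with h0 | h0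
    · rcases Nat.eq_zero_or_pos (m 1) with h1 | h1
      · exact absurd (Finsupp.ext (fun j => by
          rcases Fin.exists_fin_two.2 (Or.inl rfl) with _
          fin_cases j <;> simpa using (by first | exact h0 | exact h1))) hm0
      · right; left
        have : (m 1 : ℂ) * l2 = 0 := by rw [← key2, h0]; push_cast; ring
        rcases mul_eq_zero.1 this with hc | hc
        · exact absurd (Nat.cast_eq_zero.1 hc) h1.ne'
        · exact hc
    · rcases Nat.eq_zero_or_pos (m 1) with h1 | h1
      · left
        have : (m 0 : ℂ) * l1 = 0 := by rw [← key2, h1]; push_cast; ring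
        rcases mul_eq_zero.1 this with hc | hc
        · exact absurd (Nat.cast_eq_zero.1 hc) h0.ne'
        · exact hc
      · exact Or.inr (Or.inr ⟨m 1, m 0, h1, h0, key2⟩)
  · rintro (h1 | h2 | ⟨p, q, hp, hq, hpq⟩)
    · refine ⟨X 0, fun c => ?_, ?_⟩
      · intro hx
        have := congrArg (coeff (Finsupp.single 0 1)) hx
        rw [coeff_X, coeff_C, if_neg (show ¬ ((0 : Fin 2 →₀ ℕ) = Finsupp.single 0 1) by simp [Finsupp.single_eq_zero, eq_comm]), if_pos rfl] at this
        exact one_ne_zero this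
      · have : pderiv (1 : Fin 2) (X 0 : MvPolynomial (Fin 2) ℂ) = 0 :=
          pderiv_X_of_ne (by decide)
        rw [this, pderiv_X_self, h1, mul_zero, smul_zero, zero_smul, zero_add]
    · refine ⟨X 1, fun c => ?_, ?_⟩
      · intro hx
        have := congrArg (coeff (Finsupp.single 1 1)) hx
        rw [coeff_X, coeff_C, if_neg (show ¬ ((0 : Fin 2 →₀ ℕ) = Finsupp.single 1 1) by simp [Finsupp.single_eq_zero, eq_comm]), if_pos rfl] at this
        exact one_ne_zero this
      · have : pderiv (0 : Fin 2) (X 1 : MvPolynomial (Fin 2) ℂ) = 0 :=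
          pderiv_X_of_ne (by decide)
        rw [this, pderiv_X_self, h2, mul_zero, smul_zero, zero_smul, add_zero]
    · set m : Fin 2 →₀ ℕ := Finsupp.single 0 q + Finsupp.single 1 p with hm
      have hm0 : m 0 = q := by simp [hm, Finsupp.single_apply]
      have hm1 : m 1 = p := by simp [hm, Finsupp.single_apply]
      refine ⟨monomial m 1, fun c => ?_, ?_⟩
      · intro hx
        have := congrArg (coeff m) hx
        rw [coeff_monomial, if_pos rfl, coeff_C,
          if_neg (fun h' => by
            have h2 := congrArg (fun g : Fin 2 →₀ ℕ => g 0) h'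
            simp [hm0] at h2
            omega)] at this
        exact one_ne_zero this
      · rw [_root_.X_mul_pderiv_monomial, _root_.X_mul_pderiv_monomial, hm0, hm1,
          smul_smul, smul_smul, ← add_smul]
        rw [show l1 * (q : ℂ) + l2 * (p : ℂ) = (q : ℂ) * l1 + (p : ℂ) * l2 by ring, hpq,
          zero_smul]
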